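/- Let q ≥ 2, let r and t be positive integers coprime to q with r dividing t, let H = ⟨τ^r, σ^α⟩ and S = ⟨τ^t, σ^m τ^s⟩ be subgroups of BS(1,q) with S ⊆ H and 0 ≤ s ≤ t−1. Then τ^r (σ^m τ^s) τ^(−r) ∈ S if and only if t/r divides 1 − q^m. -/

import Mathlib

/-- The single relator `σ τ σ⁻¹ (τ^q)⁻¹` defining the Baumslag–Solitar group
`BS(1,q) = ⟨σ, τ ∣ σ τ σ⁻¹ = τ^q⟩`, with `σ` the generator `true` and `τ` the
generator `false` of the free group on `Bool`. -/
def bsRel (q : ℤ) : Set (FreeGroup Bool) :=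
  {FreeGroup.of true * FreeGroup.of false * (FreeGroup.of true)⁻¹ * (FreeGroup.of false ^ q)⁻¹}

/-- The Baumslag–Solitar group `BS(1,q)`. -/
abbrev BS (q : ℤ) := PresentedGroup (bsRel q)

/-- The generator `σ` of `BS(1,q)`. -/
def BS.σ (q : ℤ) : BS q := PresentedGroup.of true

/-- The generator `τ` of `BS(1,q)`. -/
def BS.τ (q : ℤ) : BS q := PresentedGroup.of false

open Multiplicative SemidirectProduct



def mulBy (u : ℚˣ) : MulAut (Multiplicative ℚ) :=
  AddEquiv.toMultiplicative (DistribMulAction.toAddAut ℚˣ ℚ u)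

@[simp] lemma mulBy_apply (u : ℚˣ) (b : ℚ) :
    mulBy u (ofAdd b) = ofAdd ((u : ℚ) * b) := rfl

def act (u : ℚˣ) : Multiplicative ℤ →* MulAut (Multiplicative ℚ) where
  toFun n := mulBy (u ^ n.toAdd)
  map_one' := by ext x; simp [mulBy]
  map_mul' a b := by
    ext x
    simp [mulBy, toAdd_mul, zpow_add, mul_smul]

@[simp] lemma act_apply (u : ℚˣ) (n : ℤ) (b : ℚ) :
    act u (ofAdd n) (ofAdd b) = ofAdd (((u ^ n : ℚˣ) : ℚ) * b) := rfl


lemma BS.rel (q : ℤ) : BS.σ q * BS.τ q * (BS.σ q)⁻¹ = BS.τ q ^ q := by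
  have h1 : PresentedGroup.mk (bsRel q)
      (FreeGroup.of true * FreeGroup.of false * (FreeGroup.of true)⁻¹ *
        (FreeGroup.of false ^ q)⁻¹) = 1 := by
    apply (QuotientGroup.eq_one_iff _).mpr
    exact Subgroup.subset_normalClosure rfl
  simp only [map_mul, map_inv, map_zpow] at h1
  rw [mul_inv_eq_one] at h1
  exact h1

lemma BS.rel_zpow (q a : ℤ) : BS.σ q * BS.τ q ^ a * (BS.σ q)⁻¹ = BS.τ q ^ (q * a) := by
  rw [← conj_zpow, BS.rel, ← zpow_mul]

lemma BS.rel_pow (q : ℤ) (m : ℕ) (a : ℤ) :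
    BS.σ q ^ m * BS.τ q ^ a = BS.τ q ^ (q ^ m * a) * BS.σ q ^ m := by
  induction m generalizing a with
  | zero => simp
  | succ n ih =>
      have h1 : BS.σ q * BS.τ q ^ a = BS.τ q ^ (q * a) * BS.σ q := by
        rw [← BS.rel_zpow]; group
      calc BS.σ q ^ (n+1) * BS.τ q ^ a = BS.σ q ^ n * (BS.σ q * BS.τ q ^ a) := by
            rw [pow_succ]; group
        _ = BS.σ q ^ n * BS.τ q ^ (q * a) * BS.σ q := by rw [h1]; group
        _ = BS.τ q ^ (q ^ n * (q * a)) * BS.σ q ^ n * BS.σ q := by rw [ih]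
        _ = BS.τ q ^ (q ^ (n+1) * a) * BS.σ q ^ (n+1) := by
            rw [pow_succ, pow_succ]; ring_nf; group

abbrev SD (u : ℚˣ) := Multiplicative ℚ ⋊[act u] Multiplicative ℤ

def bsGen (u : ℚˣ) : Bool → SD u := fun b =>
  if b then inr (ofAdd (1 : ℤ)) else inl (ofAdd (1 : ℚ))

lemma bsGen_rel (q : ℤ) (u : ℚˣ) (hu : (u : ℚ) = q) :
    ∀ rel ∈ bsRel q, FreeGroup.lift (bsGen u) rel = 1 := by
  rintro rel rfl
  simp only [map_mul, map_inv, map_zpow, FreeGroup.lift_apply_of, bsGen, if_pos, if_neg]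
  have h2 : (inr (ofAdd (1:ℤ)) : SD u) * inl (ofAdd (1:ℚ)) * (inr (ofAdd (1:ℤ)))⁻¹
      = inl (act u (ofAdd 1) (ofAdd 1)) := by
    rw [← map_inv, inl_aut]
  rw [if_neg (by simp)]
  rw [h2]
  have h3 : (inl (ofAdd (1:ℚ)) : SD u) ^ q = inl (ofAdd (q : ℚ)) := by
    rw [← map_zpow]
    congr 1
    rw [← ofAdd_zsmul]
    norm_num
  rw [h3]
  simp [hu, mul_inv_cancel]

noncomputable def bsHom (q : ℤ) (u : ℚˣ) (hu : (u : ℚ) = q) : BS q →* SD u :=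
  PresentedGroup.toGroup (bsGen_rel q u hu)

lemma bsHom_σ (q : ℤ) (u : ℚˣ) (hu : (u : ℚ) = q) :
    bsHom q u hu (BS.σ q) = inr (ofAdd (1 : ℤ)) := PresentedGroup.toGroup.of _

lemma bsHom_τ (q : ℤ) (u : ℚˣ) (hu : (u : ℚ) = q) :
    bsHom q u hu (BS.τ q) = inl (ofAdd (1 : ℚ)) := PresentedGroup.toGroup.of _

lemma conj_inl {N G : Type*} [CommGroup N] [Group G] {φ : G →* MulAut N}
    (x : N ⋊[φ] G) (n : N) : x * inl n * x⁻¹ = inl (φ x.right n) := by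
  ext <;> simp [mul_comm, mul_assoc, mul_left_comm]

def A' (q t : ℤ) (m : ℕ) : AddSubgroup ℚ :=
  AddSubgroup.closure (Set.range fun k : ℤ => (t : ℚ) * (q : ℚ) ^ ((m : ℤ) * k))

lemma A'_mul_mem (q t : ℤ) (m : ℕ) (hq0 : (q : ℚ) ≠ 0) (j : ℤ) {b : ℚ}
    (hb : b ∈ A' q t m) : (q : ℚ) ^ ((m : ℤ) * j) * b ∈ A' q t m := by
  induction hb using AddSubgroup.closure_induction with
  | mem x hx =>
      obtain ⟨k, rfl⟩ := hx
      apply AddSubgroup.subset_closure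
      refine ⟨j + k, ?_⟩
      show (t:ℚ) * (q:ℚ) ^ ((m:ℤ) * (j + k)) = (q:ℚ) ^ ((m:ℤ) * j) * ((t:ℚ) * (q:ℚ) ^ ((m:ℤ) * k))
      rw [mul_add, zpow_add₀ hq0]; ring
  | zero => rw [mul_zero]; exact zero_mem _
  | add x y _ _ hx hy => rw [mul_add]; exact AddSubgroup.add_mem _ hx hy
  | neg x _ hx => rw [mul_neg]; exact AddSubgroup.neg_mem _ hx

lemma A'_clear (q t : ℤ) (m : ℕ) (hq0 : (q : ℚ) ≠ 0) {b : ℚ} (hb : b ∈ A' q t m) :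
    ∃ (N : ℕ) (z : ℤ), (q : ℚ) ^ (N : ℤ) * b = (t : ℚ) * z := by
  induction hb using AddSubgroup.closure_induction with
  | mem x hx =>
      obtain ⟨k, rfl⟩ := hx
      refine ⟨((m : ℤ) * k).natAbs, q ^ (((m : ℤ) * k).natAbs + (m : ℤ) * k).toNat, ?_⟩
      have h1 : (0 : ℤ) ≤ ((m : ℤ) * k).natAbs + (m : ℤ) * k := by omega
      show (q:ℚ) ^ ((((m:ℤ)*k).natAbs : ℕ) : ℤ) * ((t:ℚ) * (q:ℚ) ^ ((m:ℤ)*k))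
          = (t:ℚ) * ((q ^ (((m : ℤ) * k).natAbs + (m : ℤ) * k).toNat : ℤ) : ℚ)
      rw [Int.cast_pow, ← zpow_natCast (q:ℚ) ((((m : ℤ) * k).natAbs + (m : ℤ) * k).toNat),
        Int.toNat_of_nonneg h1, zpow_add₀ hq0]
      ring
  | zero => exact ⟨0, 0, by simp⟩
  | add x y _ _ hx hy =>
      obtain ⟨N1, z1, h1⟩ := hx
      obtain ⟨N2, z2, h2⟩ := hy
      refine ⟨N1 + N2, q ^ N2 * z1 + q ^ N1 * z2, ?_⟩
      push_cast
      rw [← zpow_natCast (q:ℚ) N1, ← zpow_natCast (q:ℚ) N2] at *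
      rw [zpow_add₀ hq0, mul_add]
      calc (q:ℚ) ^ (N1:ℤ) * (q:ℚ) ^ (N2:ℤ) * x + (q:ℚ) ^ (N1:ℤ) * (q:ℚ) ^ (N2:ℤ) * y
          = (q:ℚ) ^ (N2:ℤ) * ((q:ℚ) ^ (N1:ℤ) * x) + (q:ℚ) ^ (N1:ℤ) * ((q:ℚ) ^ (N2:ℤ) * y) := by ring
        _ = (t:ℚ) * ((q:ℚ) ^ (N2:ℤ) * z1 + (q:ℚ) ^ (N1:ℤ) * z2) := by rw [h1, h2]; ring
  | neg x _ hx =>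
      obtain ⟨N, z, h⟩ := hx
      exact ⟨N, -z, by push_cast; rw [mul_neg, mul_neg, h]⟩

section Main

variable (q t s : ℤ) (m : ℕ) (u : ℚˣ) (hu : (u : ℚ) = q)

def vSD : SD u := inr (ofAdd (m : ℤ)) * inl (ofAdd (s : ℚ))

lemma vSD_right (j : ℤ) : ((vSD s m u) ^ j).right = ofAdd (j * (m : ℤ)) := by
  have h : ((vSD s m u) ^ j).right = rightHom ((vSD s m u) ^ j) := rfl
  rw [h, map_zpow]
  have : rightHom (vSD s m u) = ofAdd (m : ℤ) := by
    simp [vSD]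
  rw [this, ← ofAdd_zsmul, zsmul_eq_mul]; norm_num

lemma conj_v (hu : (u : ℚ) = q) (j : ℤ) (b : ℚ) :
    (vSD s m u) ^ j * inl (ofAdd b) * (vSD s m u) ^ (-j)
      = inl (ofAdd ((q : ℚ) ^ ((m : ℤ) * j) * b)) := by
  rw [zpow_neg, conj_inl, vSD_right]
  congr 1
  show ofAdd (((u ^ (j * (m:ℤ)) : ℚˣ) : ℚ) * b) = _
  rw [Units.val_zpow_eq_zpow_val, hu]
  rw [mul_comm ((m:ℤ)) j]

end Main

lemma mem_structure (q t s : ℤ) (m : ℕ) (u : ℚˣ) (hu : (u : ℚ) = q) (hq0 : (q:ℚ) ≠ 0) :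
    ∀ x ∈ Subgroup.closure ({inl (ofAdd (t:ℚ)), vSD s m u} : Set (SD u)),
      ∃ (k : ℤ) (b : ℚ), b ∈ A' q t m ∧ x = (vSD s m u) ^ k * inl (ofAdd b) := by
  intro x hx
  induction hx using Subgroup.closure_induction with
  | mem x hx =>
      rcases hx with h | h
      · refine ⟨0, t, ?_, by rw [h]; group⟩
        exact AddSubgroup.subset_closure ⟨0, by norm_num⟩
      · exact ⟨1, 0, zero_mem _, by rw [h]; simp⟩
  | one => exact ⟨0, 0, zero_mem _, by simp⟩
  | mul x y _ _ hx hy =>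
      obtain ⟨k1, b1, hb1, rfl⟩ := hx
      obtain ⟨k2, b2, hb2, rfl⟩ := hy
      refine ⟨k1 + k2, (q:ℚ) ^ ((m:ℤ) * (-k2)) * b1 + b2, ?_, ?_⟩
      · exact add_mem (A'_mul_mem q t m hq0 (-k2) hb1) hb2
      · have hc := conj_v q s m u hu (-k2) b1
        rw [neg_neg] at hc
        rw [ofAdd_add, map_mul, ← mul_assoc, ← hc]
        group
  | inv x _ hx =>
      obtain ⟨k, b, hb, rfl⟩ := hx
      refine ⟨-k, (q:ℚ) ^ ((m:ℤ) * k) * (-b), ?_, ?_⟩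
      · exact A'_mul_mem q t m hq0 k (neg_mem hb)
      · have hc := conj_v q s m u hu k (-b)
        rw [← hc, ← mul_assoc, ← mul_assoc, zpow_neg, inv_mul_cancel, one_mul,
          mul_inv_rev, ← map_inv]
        rfl

/-- Lemma A.2(1): with `H = ⟨τ^r, σ^α⟩` and `S = ⟨τ^t, σ^m τ^s⟩ ⊆ H`, `r, t`
positive and coprime to `q`, `r ∣ t`, `0 ≤ s ≤ t - 1`, we have
`τ^r (σ^m τ^s) τ^(-r) ∈ S` if and only if `t/r` divides `1 - q^m`. -/
theorem bs_tau_conj_mem_iff (q : ℤ) (hq : 2 ≤ q) (r t s : ℤ) (m α : ℕ)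
    (hr : 0 < r) (ht : 0 < t) (hrq : IsCoprime r q) (htq : IsCoprime t q)
    (hrt : r ∣ t) (hs : 0 ≤ s) (hst : s ≤ t - 1)
    (hSH : (Subgroup.closure {BS.τ q ^ t, BS.σ q ^ m * BS.τ q ^ s} : Subgroup (BS q)) ≤
      Subgroup.closure {BS.τ q ^ r, BS.σ q ^ α}) :
    BS.τ q ^ r * (BS.σ q ^ m * BS.τ q ^ s) * BS.τ q ^ (-r) ∈
        Subgroup.closure {BS.τ q ^ t, BS.σ q ^ m * BS.τ q ^ s} ↔
      (t / r) ∣ (1 - q ^ m) := by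
  obtain ⟨t', ht'⟩ := hrt
  have hr0 : r ≠ 0 := hr.ne'
  have htr : t / r = t' := by rw [ht', Int.mul_ediv_cancel_left _ hr0]
  constructor
  · intro hw
    by_cases hm : m = 0
    · subst hm; simp
    have hq0 : (q : ℚ) ≠ 0 := Int.cast_ne_zero.mpr (by omega)
    set u : ℚˣ := Units.mk0 (q : ℚ) hq0 with hudef
    have hu : (u : ℚ) = q := rfl
    set f := bsHom q u hu with hfdef
    have hfτ : ∀ a : ℤ, f (BS.τ q ^ a) = inl (ofAdd (a : ℚ)) := by
      intro a
      rw [map_zpow, bsHom_τ, ← map_zpow]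
      congr 1
      rw [← ofAdd_zsmul]
      norm_num
    have hfv : f (BS.σ q ^ m * BS.τ q ^ s) = vSD s m u := by
      rw [map_mul, map_pow, bsHom_σ, hfτ, vSD, ← map_pow]
      congr 2
      rw [← ofAdd_nsmul]
      norm_num
    have hfw : f (BS.τ q ^ r * (BS.σ q ^ m * BS.τ q ^ s) * BS.τ q ^ (-r))
        = inl (ofAdd (r : ℚ)) * vSD s m u * inl (ofAdd ((-r : ℤ) : ℚ)) := by
      rw [map_mul, map_mul, hfτ, hfv, hfτ]
    have hmem : f (BS.τ q ^ r * (BS.σ q ^ m * BS.τ q ^ s) * BS.τ q ^ (-r)) ∈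
        Subgroup.closure ({inl (ofAdd (t : ℚ)), vSD s m u} : Set (SD u)) := by
      have hle : Subgroup.closure {BS.τ q ^ t, BS.σ q ^ m * BS.τ q ^ s} ≤
          Subgroup.comap f (Subgroup.closure ({inl (ofAdd (t : ℚ)), vSD s m u} : Set (SD u))) := by
        rw [Subgroup.closure_le]
        rintro x (rfl | rfl)
        · rw [SetLike.mem_coe, Subgroup.mem_comap, hfτ]
          exact Subgroup.subset_closure (Set.mem_insert _ _)
        · rw [SetLike.mem_coe, Subgroup.mem_comap, hfv]
          exact Subgroup.subset_closure (Set.mem_insert_iff.mpr (Or.inr rfl))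
      exact hle hw
    obtain ⟨k, b, hb, heq⟩ := mem_structure q t s m u hu hq0 _ hmem
    rw [hfw] at heq
    have hk : k = 1 := by
      have h1 := congrArg SemidirectProduct.rightHom heq
      rw [map_mul, map_mul, rightHom_inl, rightHom_inl, map_mul] at h1
      have h2 : rightHom (vSD s m u ^ k) = ofAdd (k * (m : ℤ)) := vSD_right s m u k
      have h3 : rightHom (vSD s m u) = ofAdd ((m : ℤ)) := by
        have := vSD_right s m u 1
        rwa [zpow_one, one_mul] at this
      rw [h2, h3, rightHom_inl] at h1
      have h4 : (m : ℤ) = k * (m : ℤ) := by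
        have h5 := h1
        simp only [one_mul, mul_one] at h5
        exact ofAdd.injective h5
      have hm' : (m : ℤ) ≠ 0 := Int.natCast_ne_zero.mpr hm
      have h6 : (k - 1) * (m : ℤ) = 0 := by linear_combination -h4
      rcases mul_eq_zero.mp h6 with h | h
      · omega
      · exact absurd h hm'
    subst hk
    rw [zpow_one] at heq
    have hinv : inl (ofAdd b) = (vSD s m u)⁻¹ *
        (inl (ofAdd (r : ℚ)) * vSD s m u * inl (ofAdd ((-r : ℤ) : ℚ))) := by
      rw [heq, ← mul_assoc, inv_mul_cancel, one_mul]
    have hc := conj_v q s m u hu (-1) (r : ℚ)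
    rw [neg_neg, zpow_one, zpow_neg_one] at hc
    have hbv : b = (q : ℚ) ^ ((m : ℤ) * (-1)) * r + (-r : ℤ) := by
      have h5 : (vSD s m u)⁻¹ * (inl (ofAdd (r : ℚ)) * vSD s m u * inl (ofAdd ((-r : ℤ) : ℚ)))
          = inl (ofAdd ((q : ℚ) ^ ((m : ℤ) * (-1)) * r + ((-r : ℤ) : ℚ))) := by
        rw [ofAdd_add, map_mul, ← hc]
        group
      rw [h5] at hinv
      have := inl_injective hinv
      exact ofAdd.injective this
    obtain ⟨N, z, hNz⟩ := A'_clear q t m hq0 hb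
    have h2 : (q : ℚ) ^ ((m : ℕ) : ℤ) * ((q : ℚ) ^ (N : ℤ) * b)
        = (q : ℚ) ^ (N : ℤ) * ((r : ℚ) * (1 - (q : ℚ) ^ ((m : ℕ) : ℤ))) := by
      rw [hbv, show ((m : ℤ) * (-1)) = -((m : ℕ) : ℤ) by ring, zpow_neg]
      field_simp
      push_cast
      ring
    have h3 : (q : ℚ) ^ ((m : ℕ) : ℤ) * ((t : ℚ) * z)
        = (q : ℚ) ^ (N : ℤ) * ((r : ℚ) * (1 - (q : ℚ) ^ ((m : ℕ) : ℤ))) := by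
      rw [← hNz]; exact h2
    rw [zpow_natCast, zpow_natCast] at h3
    have h4 : q ^ m * (t * z) = q ^ N * (r * (1 - q ^ m)) := by exact_mod_cast h3
    have hdvd : t ∣ q ^ N * (r * (1 - q ^ m)) := ⟨q ^ m * z, by rw [← h4]; ring⟩
    have hdvd2 : t ∣ r * (1 - q ^ m) := (htq.pow_right).dvd_of_dvd_mul_left hdvd
    rw [htr]
    rw [ht'] at hdvd2
    exact (mul_dvd_mul_iff_left hr0).mp hdvd2
  · intro hdvd
    rw [htr] at hdvd
    obtain ⟨c, hc⟩ := hdvd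
    have key : BS.τ q ^ r * (BS.σ q ^ m * BS.τ q ^ s) * BS.τ q ^ (-r)
        = (BS.τ q ^ t) ^ c * (BS.σ q ^ m * BS.τ q ^ s) := by
      have e : r + q ^ m * (s + -r) = t * c + q ^ m * s := by
        rw [ht']
        linear_combination r * hc
      calc BS.τ q ^ r * (BS.σ q ^ m * BS.τ q ^ s) * BS.τ q ^ (-r)
          = BS.τ q ^ r * (BS.σ q ^ m * BS.τ q ^ (s + -r)) := by
            rw [zpow_add]; group
        _ = BS.τ q ^ r * (BS.τ q ^ (q ^ m * (s + -r)) * BS.σ q ^ m) := by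
            rw [BS.rel_pow]
        _ = BS.τ q ^ (r + q ^ m * (s + -r)) * BS.σ q ^ m := by
            rw [zpow_add]; group
        _ = BS.τ q ^ (t * c + q ^ m * s) * BS.σ q ^ m := by rw [e]
        _ = (BS.τ q ^ t) ^ c * (BS.σ q ^ m * BS.τ q ^ s) := by
            rw [BS.rel_pow, zpow_add, ← zpow_mul]; group
    rw [key]
    exact mul_mem (zpow_mem (Subgroup.subset_closure (Set.mem_insert _ _)) c)
      (Subgroup.subset_closure (Set.mem_insert_iff.mpr (Or.inr rfl)))
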